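/- Let a₁, a₂, b₁, b₂ be constants with a₁, a₂ ≠ 0 and a₁ + a₂ ≠ 0, let A = ((a₁−a₂)/(a₁+a₂))², θᵢ = aᵢ x − aᵢ³ t + bᵢ. Then U(t,x) = [e^{θ₁}(1 + (A/(4a₂²))e^{2θ₂}) + e^{θ₂}(1 + (A/(4a₁²))e^{2θ₁})] / [((1/(2a₁))e^{θ₁} + (1/(2a₂))e^{θ₂})² + (1 − (A/(4a₁a₂))e^{θ₁+θ₂})²] solves U_t + 6U² U_x + U_{xxx} = 0 on the set where the denominator is nonzero. -/

import Mathlib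

noncomputable def Efn (a b t : ℝ) : ℝ → ℝ := fun y => Real.exp (a * y - a ^ 3 * t + b)

noncomputable def P4 (c₁ c₂ c₃ c₄ : ℝ) (f g : ℝ → ℝ) : ℝ → ℝ :=
  fun y => c₁ * f y + c₂ * g y + c₃ * (f y * g y ^ 2) + c₄ * (f y ^ 2 * g y)

noncomputable def P5 (c₀ c₁ c₂ c₃ c₄ : ℝ) (f g : ℝ → ℝ) : ℝ → ℝ :=
  fun y => c₀ + c₁ * f y ^ 2 + c₂ * (f y * g y) + c₃ * g y ^ 2 + c₄ * (f y ^ 2 * g y ^ 2)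

lemma mkdv_hEx (a b t y : ℝ) : HasDerivAt (Efn a b t) (a * Efn a b t y) y := by
  have h : HasDerivAt (fun z : ℝ => a * z - a ^ 3 * t + b) a y := by
    simpa using (((hasDerivAt_id y).const_mul a).sub_const (a ^ 3 * t)).add_const b
  have h2 : HasDerivAt (Efn a b t) (Real.exp (a * y - a ^ 3 * t + b) * a) y := h.exp
  convert h2 using 1
  unfold Efn
  ring

lemma mkdv_hEt (a b y t : ℝ) :
    HasDerivAt (fun s => Efn a b s y) (-a ^ 3 * Efn a b t y) t := by
  have h : HasDerivAt (fun s : ℝ => a * y - a ^ 3 * s + b) (-a ^ 3) t := by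
    simpa using ((((hasDerivAt_id t).const_mul (a ^ 3)).const_sub (a * y)).add_const b)
  have h2 : HasDerivAt (fun s => Efn a b s y) (Real.exp (a * y - a ^ 3 * t + b) * -a ^ 3) t :=
    h.exp
  convert h2 using 1
  unfold Efn
  ring

lemma mkdv_hP4x (c₁ c₂ c₃ c₄ a₁ b₁ a₂ b₂ t y : ℝ) :
    HasDerivAt (P4 c₁ c₂ c₃ c₄ (Efn a₁ b₁ t) (Efn a₂ b₂ t))
      (P4 (a₁ * c₁) (a₂ * c₂) ((a₁ + 2 * a₂) * c₃) ((2 * a₁ + a₂) * c₄)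
        (Efn a₁ b₁ t) (Efn a₂ b₂ t) y) y := by
  have h1 := mkdv_hEx a₁ b₁ t y
  have h2 := mkdv_hEx a₂ b₂ t y
  have h := (((h1.const_mul c₁).add (h2.const_mul c₂)).add
      ((h1.mul (h2.pow 2)).const_mul c₃)).add (((h1.pow 2).mul h2).const_mul c₄)
  refine h.congr_deriv ?_
  simp only [P4, Pi.pow_apply]
  push_cast
  ring

lemma mkdv_hP4t (c₁ c₂ c₃ c₄ a₁ b₁ a₂ b₂ y t : ℝ) :
    HasDerivAt (fun s => P4 c₁ c₂ c₃ c₄ (Efn a₁ b₁ s) (Efn a₂ b₂ s) y)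
      (P4 (-a₁ ^ 3 * c₁) (-a₂ ^ 3 * c₂) ((-a₁ ^ 3 + 2 * -a₂ ^ 3) * c₃)
        ((2 * -a₁ ^ 3 + -a₂ ^ 3) * c₄) (Efn a₁ b₁ t) (Efn a₂ b₂ t) y) t := by
  have h1 := mkdv_hEt a₁ b₁ y t
  have h2 := mkdv_hEt a₂ b₂ y t
  have h := (((h1.const_mul c₁).add (h2.const_mul c₂)).add
      ((h1.mul (h2.pow 2)).const_mul c₃)).add (((h1.pow 2).mul h2).const_mul c₄)
  refine h.congr_deriv ?_
  simp only [P4, Pi.pow_apply]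
  push_cast
  ring

lemma mkdv_hP5x (c₀ c₁ c₂ c₃ c₄ a₁ b₁ a₂ b₂ t y : ℝ) :
    HasDerivAt (P5 c₀ c₁ c₂ c₃ c₄ (Efn a₁ b₁ t) (Efn a₂ b₂ t))
      (P5 0 (2 * a₁ * c₁) ((a₁ + a₂) * c₂) (2 * a₂ * c₃) ((2 * a₁ + 2 * a₂) * c₄)
        (Efn a₁ b₁ t) (Efn a₂ b₂ t) y) y := by
  have h1 := mkdv_hEx a₁ b₁ t y
  have h2 := mkdv_hEx a₂ b₂ t y
  have h := ((((hasDerivAt_const y c₀).add ((h1.pow 2).const_mul c₁)).add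
      ((h1.mul h2).const_mul c₂)).add ((h2.pow 2).const_mul c₃)).add
      (((h1.pow 2).mul (h2.pow 2)).const_mul c₄)
  refine h.congr_deriv ?_
  simp only [P5, Pi.pow_apply]
  push_cast
  ring

lemma mkdv_hP5t (c₀ c₁ c₂ c₃ c₄ a₁ b₁ a₂ b₂ y t : ℝ) :
    HasDerivAt (fun s => P5 c₀ c₁ c₂ c₃ c₄ (Efn a₁ b₁ s) (Efn a₂ b₂ s) y)
      (P5 0 (2 * -a₁ ^ 3 * c₁) ((-a₁ ^ 3 + -a₂ ^ 3) * c₂) (2 * -a₂ ^ 3 * c₃)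
        ((2 * -a₁ ^ 3 + 2 * -a₂ ^ 3) * c₄) (Efn a₁ b₁ t) (Efn a₂ b₂ t) y) t := by
  have h1 := mkdv_hEt a₁ b₁ y t
  have h2 := mkdv_hEt a₂ b₂ y t
  have h := ((((hasDerivAt_const t c₀).add ((h1.pow 2).const_mul c₁)).add
      ((h1.mul h2).const_mul c₂)).add ((h2.pow 2).const_mul c₃)).add
      (((h1.pow 2).mul (h2.pow 2)).const_mul c₄)
  refine h.congr_deriv ?_
  simp only [P5, Pi.pow_apply]
  push_cast
  ring

lemma mkdv_div_sq {p q : ℝ → ℝ} {p' q' y : ℝ} (hp : HasDerivAt p p' y)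
    (hq : HasDerivAt q q' y) (h : q y ≠ 0) :
    HasDerivAt (fun z => p z / q z ^ 2) ((p' * q y - 2 * (p y * q')) / q y ^ 3) y := by
  have hq2 : HasDerivAt (fun z => q z ^ 2) (2 * q y ^ 1 * q') y := by
    simpa using hq.fun_pow 2
  have h2 : q y ^ 2 ≠ 0 := pow_ne_zero _ h
  have hd := hp.div hq2 h2
  refine hd.congr_deriv ?_
  field_simp

lemma mkdv_div_cube {p q : ℝ → ℝ} {p' q' y : ℝ} (hp : HasDerivAt p p' y)
    (hq : HasDerivAt q q' y) (h : q y ≠ 0) :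
    HasDerivAt (fun z => p z / q z ^ 3) ((p' * q y - 3 * (p y * q')) / q y ^ 4) y := by
  have hq3 : HasDerivAt (fun z => q z ^ 3) (3 * q y ^ 2 * q') y := by
    simpa using hq.fun_pow 3
  have h3 : q y ^ 3 ≠ 0 := pow_ne_zero _ h
  have hd := hp.div hq3 h3
  refine hd.congr_deriv ?_
  field_simp

lemma mkdv_combine {T1 T3 n m d : ℝ} (hd : d ≠ 0)
    (h : T1 * d ^ 2 + 6 * n ^ 2 * m + T3 = 0) :
    T1 / d ^ 2 + 6 * (n / d) ^ 2 * (m / d ^ 2) + T3 / d ^ 4 = 0 := by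
  have he : T1 / d ^ 2 + 6 * (n / d) ^ 2 * (m / d ^ 2) + T3 / d ^ 4
      = (T1 * d ^ 2 + 6 * n ^ 2 * m + T3) / d ^ 4 := by
    field_simp
  rw [he, h, zero_div]

set_option maxHeartbeats 16000000 in
/-- Two-soliton solution of the mKdV equation `U_t + 6U²U_x + U_{xxx} = 0`. -/
theorem stmt_15 (a₁ a₂ b₁ b₂ : ℝ) (ha₁ : a₁ ≠ 0) (ha₂ : a₂ ≠ 0) (ha : a₁ + a₂ ≠ 0)
    (A : ℝ) (hA : A = ((a₁ - a₂) / (a₁ + a₂))^2)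
    (θ₁ θ₂ : ℝ → ℝ → ℝ)
    (hθ₁ : ∀ t x, θ₁ t x = a₁ * x - a₁^3 * t + b₁)
    (hθ₂ : ∀ t x, θ₂ t x = a₂ * x - a₂^3 * t + b₂)
    (U : ℝ → ℝ → ℝ)
    (hU : ∀ t x, U t x =
      (Real.exp (θ₁ t x) * (1 + (A / (4 * a₂^2)) * Real.exp (2 * θ₂ t x))
        + Real.exp (θ₂ t x) * (1 + (A / (4 * a₁^2)) * Real.exp (2 * θ₁ t x)))
      / (((1 / (2 * a₁)) * Real.exp (θ₁ t x) + (1 / (2 * a₂)) * Real.exp (θ₂ t x))^2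
        + (1 - (A / (4 * a₁ * a₂)) * Real.exp (θ₁ t x + θ₂ t x))^2)) :
    ∀ t x, ((1 / (2 * a₁)) * Real.exp (θ₁ t x) + (1 / (2 * a₂)) * Real.exp (θ₂ t x))^2
        + (1 - (A / (4 * a₁ * a₂)) * Real.exp (θ₁ t x + θ₂ t x))^2 ≠ 0 →
      deriv (fun s => U s x) t + 6 * (U t x)^2 * deriv (U t) x
        + iteratedDeriv 3 (U t) x = 0 := by
  intro t x hDne
  have hs : (4 * a₁ ^ 2 * a₂ ^ 2 : ℝ) ≠ 0 :=
    mul_ne_zero (mul_ne_zero four_ne_zero (pow_ne_zero 2 ha₁)) (pow_ne_zero 2 ha₂)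
  have hnum : ∀ s y : ℝ,
      (4 * a₁ ^ 2 * a₂ ^ 2) *
        (Real.exp (θ₁ s y) * (1 + (A / (4 * a₂^2)) * Real.exp (2 * θ₂ s y))
          + Real.exp (θ₂ s y) * (1 + (A / (4 * a₁^2)) * Real.exp (2 * θ₁ s y)))
      = P4 (4 * a₁ ^ 2 * a₂ ^ 2) (4 * a₁ ^ 2 * a₂ ^ 2) (A * a₁ ^ 2) (A * a₂ ^ 2) (Efn a₁ b₁ s) (Efn a₂ b₂ s) y := by
    intro s y
    rw [two_mul (θ₂ s y), two_mul (θ₁ s y), Real.exp_add, Real.exp_add]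
    simp only [hθ₁, hθ₂, P4, Efn]
    field_simp
    ring
  have hden : ∀ s y : ℝ,
      (4 * a₁ ^ 2 * a₂ ^ 2) *
        (((1 / (2 * a₁)) * Real.exp (θ₁ s y) + (1 / (2 * a₂)) * Real.exp (θ₂ s y))^2
          + (1 - (A / (4 * a₁ * a₂)) * Real.exp (θ₁ s y + θ₂ s y))^2)
      = P5 (4 * a₁ ^ 2 * a₂ ^ 2) (a₂ ^ 2) (2 * a₁ * a₂ - 2 * A * a₁ * a₂) (a₁ ^ 2) (A ^ 2 / 4) (Efn a₁ b₁ s) (Efn a₂ b₂ s) y := by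
    intro s y
    rw [Real.exp_add]
    simp only [hθ₁, hθ₂, P5, Efn]
    field_simp
    ring
  set F : ℝ → ℝ := Efn a₁ b₁ t with hF
  set G : ℝ → ℝ := Efn a₂ b₂ t with hG
  set N0 : ℝ → ℝ := P4 (4 * a₁ ^ 2 * a₂ ^ 2) (4 * a₁ ^ 2 * a₂ ^ 2) (A * a₁ ^ 2) (A * a₂ ^ 2) F G with hN0d
  set N1 : ℝ → ℝ := P4 (a₁ * (4 * a₁ ^ 2 * a₂ ^ 2)) (a₂ * (4 * a₁ ^ 2 * a₂ ^ 2)) ((a₁ + 2 * a₂) * (A * a₁ ^ 2)) ((2 * a₁ + a₂) * (A * a₂ ^ 2)) F G with hN1d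
  set N2 : ℝ → ℝ := P4 (a₁ * (a₁ * (4 * a₁ ^ 2 * a₂ ^ 2))) (a₂ * (a₂ * (4 * a₁ ^ 2 * a₂ ^ 2))) ((a₁ + 2 * a₂) * ((a₁ + 2 * a₂) * (A * a₁ ^ 2))) ((2 * a₁ + a₂) * ((2 * a₁ + a₂) * (A * a₂ ^ 2))) F G with hN2d
  set N3 : ℝ → ℝ := P4 (a₁ * (a₁ * (a₁ * (4 * a₁ ^ 2 * a₂ ^ 2)))) (a₂ * (a₂ * (a₂ * (4 * a₁ ^ 2 * a₂ ^ 2)))) ((a₁ + 2 * a₂) * ((a₁ + 2 * a₂) * ((a₁ + 2 * a₂) * (A * a₁ ^ 2)))) ((2 * a₁ + a₂) * ((2 * a₁ + a₂) * ((2 * a₁ + a₂) * (A * a₂ ^ 2)))) F G with hN3d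
  set D0 : ℝ → ℝ := P5 (4 * a₁ ^ 2 * a₂ ^ 2) (a₂ ^ 2) (2 * a₁ * a₂ - 2 * A * a₁ * a₂) (a₁ ^ 2) (A ^ 2 / 4) F G with hD0d
  set D1 : ℝ → ℝ := P5 0 (2 * a₁ * (a₂ ^ 2)) ((a₁ + a₂) * (2 * a₁ * a₂ - 2 * A * a₁ * a₂)) (2 * a₂ * (a₁ ^ 2)) ((2 * a₁ + 2 * a₂) * (A ^ 2 / 4)) F G with hD1d
  set D2 : ℝ → ℝ := P5 0 (2 * a₁ * (2 * a₁ * (a₂ ^ 2))) ((a₁ + a₂) * ((a₁ + a₂) * (2 * a₁ * a₂ - 2 * A * a₁ * a₂))) (2 * a₂ * (2 * a₂ * (a₁ ^ 2))) ((2 * a₁ + 2 * a₂) * ((2 * a₁ + 2 * a₂) * (A ^ 2 / 4))) F G with hD2d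
  set D3 : ℝ → ℝ := P5 0 (2 * a₁ * (2 * a₁ * (2 * a₁ * (a₂ ^ 2)))) ((a₁ + a₂) * ((a₁ + a₂) * ((a₁ + a₂) * (2 * a₁ * a₂ - 2 * A * a₁ * a₂)))) (2 * a₂ * (2 * a₂ * (2 * a₂ * (a₁ ^ 2)))) ((2 * a₁ + 2 * a₂) * ((2 * a₁ + 2 * a₂) * ((2 * a₁ + 2 * a₂) * (A ^ 2 / 4)))) F G with hD3d
  have hUeq : U t = fun y => N0 y / D0 y := by
    funext y
    rw [hU, ← mul_div_mul_left _ _ hs, hnum t y, hden t y, ← hF, ← hG, ← hN0d, ← hD0d]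
  have hD0x : D0 x ≠ 0 := by
    rw [hD0d, hF, hG, ← hden t x]
    exact mul_ne_zero hs hDne
  have h10 : ∀ y : ℝ, HasDerivAt N0 (N1 y) y := by
    intro y
    rw [hN0d, hN1d, hF, hG]
    exact mkdv_hP4x (4 * a₁ ^ 2 * a₂ ^ 2) (4 * a₁ ^ 2 * a₂ ^ 2) (A * a₁ ^ 2) (A * a₂ ^ 2) a₁ b₁ a₂ b₂ t y
  have h11 : ∀ y : ℝ, HasDerivAt N1 (N2 y) y := by
    intro y
    rw [hN1d, hN2d, hF, hG]
    exact mkdv_hP4x (a₁ * (4 * a₁ ^ 2 * a₂ ^ 2)) (a₂ * (4 * a₁ ^ 2 * a₂ ^ 2)) ((a₁ + 2 * a₂) * (A * a₁ ^ 2)) ((2 * a₁ + a₂) * (A * a₂ ^ 2)) a₁ b₁ a₂ b₂ t y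
  have h12 : ∀ y : ℝ, HasDerivAt N2 (N3 y) y := by
    intro y
    rw [hN2d, hN3d, hF, hG]
    exact mkdv_hP4x (a₁ * (a₁ * (4 * a₁ ^ 2 * a₂ ^ 2))) (a₂ * (a₂ * (4 * a₁ ^ 2 * a₂ ^ 2))) ((a₁ + 2 * a₂) * ((a₁ + 2 * a₂) * (A * a₁ ^ 2))) ((2 * a₁ + a₂) * ((2 * a₁ + a₂) * (A * a₂ ^ 2))) a₁ b₁ a₂ b₂ t y
  have h20 : ∀ y : ℝ, HasDerivAt D0 (D1 y) y := by
    intro y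
    rw [hD0d, hD1d, hF, hG]
    exact mkdv_hP5x (4 * a₁ ^ 2 * a₂ ^ 2) (a₂ ^ 2) (2 * a₁ * a₂ - 2 * A * a₁ * a₂) (a₁ ^ 2) (A ^ 2 / 4) a₁ b₁ a₂ b₂ t y
  have h21 : ∀ y : ℝ, HasDerivAt D1 (D2 y) y := by
    intro y
    rw [hD1d, hD2d, hF, hG]
    exact mkdv_hP5x 0 (2 * a₁ * (a₂ ^ 2)) ((a₁ + a₂) * (2 * a₁ * a₂ - 2 * A * a₁ * a₂)) (2 * a₂ * (a₁ ^ 2)) ((2 * a₁ + 2 * a₂) * (A ^ 2 / 4)) a₁ b₁ a₂ b₂ t y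
  have h22 : ∀ y : ℝ, HasDerivAt D2 (D3 y) y := by
    intro y
    rw [hD2d, hD3d, hF, hG]
    exact mkdv_hP5x 0 (2 * a₁ * (2 * a₁ * (a₂ ^ 2))) ((a₁ + a₂) * ((a₁ + a₂) * (2 * a₁ * a₂ - 2 * A * a₁ * a₂))) (2 * a₂ * (2 * a₂ * (a₁ ^ 2))) ((2 * a₁ + 2 * a₂) * ((2 * a₁ + 2 * a₂) * (A ^ 2 / 4))) a₁ b₁ a₂ b₂ t y
  set M1 : ℝ → ℝ := fun z => N1 z * D0 z - N0 z * D1 z with hM1d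
  set M1p : ℝ → ℝ := fun z => N2 z * D0 z - N0 z * D2 z with hM1pd
  set M2 : ℝ → ℝ := fun z => M1p z * D0 z - 2 * (M1 z * D1 z) with hM2d
  set M2p : ℝ → ℝ := fun z =>
      (N3 z * D0 z + N2 z * D1 z - (N1 z * D2 z + N0 z * D3 z)) * D0 z
        - M1p z * D1 z - 2 * M1 z * D2 z with hM2pd
  have hM1x : ∀ y : ℝ, HasDerivAt M1 (M1p y) y := by
    intro y
    rw [hM1d]
    simp only [hM1pd]
    have h := ((h11 y).mul (h20 y)).sub ((h10 y).mul (h21 y))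
    refine h.congr_deriv ?_
    ring
  have hM1px : ∀ y : ℝ, HasDerivAt M1p
      (N3 y * D0 y + N2 y * D1 y - (N1 y * D2 y + N0 y * D3 y)) y := by
    intro y
    rw [hM1pd]
    exact ((h12 y).mul (h20 y)).sub ((h10 y).mul (h22 y))
  have hM2x : ∀ y : ℝ, HasDerivAt M2 (M2p y) y := by
    intro y
    rw [hM2d]
    simp only [hM2pd]
    have h := ((hM1px y).mul (h20 y)).sub (((hM1x y).mul (h21 y)).const_mul 2)
    refine h.congr_deriv ?_
    ring
  have h1 : ∀ y : ℝ, D0 y ≠ 0 → HasDerivAt (U t) (M1 y / D0 y ^ 2) y := by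
    intro y hy
    rw [hUeq]
    simp only [hM1d]
    exact (h10 y).div (h20 y) hy
  have h2 : ∀ y : ℝ, D0 y ≠ 0 →
      HasDerivAt (fun z => M1 z / D0 z ^ 2) (M2 y / D0 y ^ 3) y := by
    intro y hy
    simp only [hM2d]
    exact mkdv_div_sq (hM1x y) (h20 y) hy
  have h3 : HasDerivAt (fun z => M2 z / D0 z ^ 3)
      ((M2p x * D0 x - 3 * (M2 x * D1 x)) / D0 x ^ 4) x :=
    mkdv_div_cube (hM2x x) (h20 x) hD0x
  have hDcont : Continuous D0 := by
    rw [hD0d, hF, hG]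
    unfold P5 Efn
    fun_prop
  have hSo : IsOpen {y : ℝ | D0 y ≠ 0} := by
    have he : {y : ℝ | D0 y ≠ 0} = D0 ⁻¹' {(0:ℝ)}ᶜ := rfl
    rw [he]
    exact (isOpen_compl_singleton).preimage hDcont
  have hd1 : ∀ y : ℝ, D0 y ≠ 0 →
      deriv (U t) =ᶠ[nhds y] (fun z => M1 z / D0 z ^ 2) := by
    intro y hy
    filter_upwards [hSo.mem_nhds hy] with z hz
    exact (h1 z hz).deriv
  have hd2 : ∀ y : ℝ, D0 y ≠ 0 →
      deriv (deriv (U t)) y = M2 y / D0 y ^ 3 := by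
    intro y hy
    exact ((hd1 y hy).deriv_eq).trans (h2 y hy).deriv
  have hd2e : deriv (deriv (U t)) =ᶠ[nhds x] (fun z => M2 z / D0 z ^ 3) := by
    filter_upwards [hSo.mem_nhds hD0x] with z hz
    exact hd2 z hz
  have hd3 : iteratedDeriv 3 (U t) x = (M2p x * D0 x - 3 * (M2 x * D1 x)) / D0 x ^ 4 := by
    have e3 : iteratedDeriv 3 (U t) = deriv (iteratedDeriv 2 (U t)) := iteratedDeriv_succ
    have e2 : iteratedDeriv 2 (U t) = deriv (iteratedDeriv 1 (U t)) := iteratedDeriv_succ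
    have e1 : iteratedDeriv 1 (U t) = deriv (U t) := iteratedDeriv_one
    rw [e3, e2, e1]
    exact (hd2e.deriv_eq).trans h3.deriv
  have hUt : HasDerivAt (fun s => U s x)
      ((P4 (-a₁ ^ 3 * (4 * a₁ ^ 2 * a₂ ^ 2)) (-a₂ ^ 3 * (4 * a₁ ^ 2 * a₂ ^ 2)) ((-a₁ ^ 3 + 2 * -a₂ ^ 3) * (A * a₁ ^ 2)) ((2 * -a₁ ^ 3 + -a₂ ^ 3) * (A * a₂ ^ 2)) F G x * D0 x - N0 x * (P5 0 (2 * -a₁ ^ 3 * (a₂ ^ 2)) ((-a₁ ^ 3 + -a₂ ^ 3) * (2 * a₁ * a₂ - 2 * A * a₁ * a₂)) (2 * -a₂ ^ 3 * (a₁ ^ 2)) ((2 * -a₁ ^ 3 + 2 * -a₂ ^ 3) * (A ^ 2 / 4)) F G x)) / D0 x ^ 2) t := by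
    have hfeq : (fun s => U s x) = fun s => P4 (4 * a₁ ^ 2 * a₂ ^ 2) (4 * a₁ ^ 2 * a₂ ^ 2) (A * a₁ ^ 2) (A * a₂ ^ 2) (Efn a₁ b₁ s) (Efn a₂ b₂ s) x / P5 (4 * a₁ ^ 2 * a₂ ^ 2) (a₂ ^ 2) (2 * a₁ * a₂ - 2 * A * a₁ * a₂) (a₁ ^ 2) (A ^ 2 / 4) (Efn a₁ b₁ s) (Efn a₂ b₂ s) x := by
      funext s
      rw [hU, ← mul_div_mul_left _ _ hs, hnum s x, hden s x]
    rw [hfeq, hN0d, hD0d, hF, hG]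
    refine (mkdv_hP4t (4 * a₁ ^ 2 * a₂ ^ 2) (4 * a₁ ^ 2 * a₂ ^ 2) (A * a₁ ^ 2) (A * a₂ ^ 2) a₁ b₁ a₂ b₂ x t).div
      (mkdv_hP5t (4 * a₁ ^ 2 * a₂ ^ 2) (a₂ ^ 2) (2 * a₁ * a₂ - 2 * A * a₁ * a₂) (a₁ ^ 2) (A ^ 2 / 4) a₁ b₁ a₂ b₂ x t) ?_
    have h := hD0x
    rw [hD0d, hF, hG] at h
    exact h
  have hUx : U t x = N0 x / D0 x := by rw [hUeq]
  have hA' : A * (a₁ + a₂) ^ 2 = (a₁ - a₂) ^ 2 := by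
    rw [hA, div_pow, div_mul_cancel₀ _ (pow_ne_zero 2 ha)]
  have key : (P4 (-a₁ ^ 3 * (4 * a₁ ^ 2 * a₂ ^ 2)) (-a₂ ^ 3 * (4 * a₁ ^ 2 * a₂ ^ 2)) ((-a₁ ^ 3 + 2 * -a₂ ^ 3) * (A * a₁ ^ 2)) ((2 * -a₁ ^ 3 + -a₂ ^ 3) * (A * a₂ ^ 2)) F G x * D0 x - N0 x * (P5 0 (2 * -a₁ ^ 3 * (a₂ ^ 2)) ((-a₁ ^ 3 + -a₂ ^ 3) * (2 * a₁ * a₂ - 2 * A * a₁ * a₂)) (2 * -a₂ ^ 3 * (a₁ ^ 2)) ((2 * -a₁ ^ 3 + 2 * -a₂ ^ 3) * (A ^ 2 / 4)) F G x)) * D0 x ^ 2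
      + 6 * N0 x ^ 2 * M1 x + (M2p x * D0 x - 3 * (M2 x * D1 x)) = 0 := by
    simp only [hM2pd, hM2d, hM1pd, hM1d, hN0d, hN1d, hN2d, hN3d, hD0d, hD1d, hD2d, hD3d,
      hF, hG, P4, P5, Efn]
    set X : ℝ := Real.exp (a₁ * x - a₁ ^ 3 * t + b₁) with hXd
    set Y : ℝ := Real.exp (a₂ * x - a₂ ^ 3 * t + b₂) with hYd
    linear_combination ((768)*X*Y^2*a₁^7*a₂^8 + (384)*X*Y^2*a₁^8*a₂^7 + (192)*X*Y^4*a₁^8*a₂^5 + (-48)*X*Y^6*a₁^7*a₂^4 + (24)*X*Y^6*a₁^8*a₂^3 + (384)*X^2*Y*a₁^7*a₂^8 + (768)*X^2*Y*a₁^8*a₂^7 + (384)*X^2*Y^3*a₁^6*a₂^7 + (-384)*X^2*Y^3*a₁^6*a₂^7*A + (-192)*X^2*Y^3*a₁^7*a₂^6 + (288)*X^2*Y^3*a₁^7*a₂^6*A + (384)*X^2*Y^3*a₁^8*a₂^5 + (192)*X^2*Y^3*a₁^8*a₂^5*A + (-96)*X^2*Y^5*a₁^6*a₂^5 + (96)*X^2*Y^5*a₁^6*a₂^5*A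 + (-72)*X^2*Y^5*a₁^7*a₂^4 + (48)*X^2*Y^5*a₁^7*a₂^4*A + (48)*X^2*Y^5*a₁^8*a₂^3 + (96)*X^2*Y^5*a₁^8*a₂^3*A + (-6)*X^2*Y^7*a₁^7*a₂^2*A + (12)*X^2*Y^7*a₁^8*a₂*A + (384)*X^3*Y^2*a₁^5*a₂^8 + (192)*X^3*Y^2*a₁^5*a₂^8*A + (-192)*X^3*Y^2*a₁^6*a₂^7 + (288)*X^3*Y^2*a₁^6*a₂^7*A + (384)*X^3*Y^2*a₁^7*a₂^6 + (-384)*X^3*Y^2*a₁^7*a₂^6*A + (-336)*X^3*Y^4*a₁^6*a₂^5 + (720)*X^3*Y^4*a₁^6*a₂^5*A + (-336)*X^3*Y^4*a₁^6*a₂^5*A^2 + (96)*X^3*Y^4*a₁^7*a₂^4 + (-96)*X^3*Y^4*a₁^7*a₂^4*A^2 + (-12)*X^3*Y^6*a₁^5*a₂^4*A + (-24)*X^3*Y^6*a₁^5*a₂^4*A^2 + (18)*X^3*Y^6*a₁^6*a₂^3*A + (-12)*X^3*Y^6*a₁^6*a₂^3*A^2 + (24)*X^3*Y^6*a₁^7*a₂^2*A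 + (-24)*X^3*Y^6*a₁^7*a₂^2*A^2 + (192)*X^4*Y*a₁^5*a₂^8 + (96)*X^4*Y^3*a₁^4*a₂^7 + (-96)*X^4*Y^3*a₁^4*a₂^7*A^2 + (-336)*X^4*Y^3*a₁^5*a₂^6 + (720)*X^4*Y^3*a₁^5*a₂^6*A + (-336)*X^4*Y^3*a₁^5*a₂^6*A^2 + (-24)*X^4*Y^5*a₁^4*a₂^5*A + (24)*X^4*Y^5*a₁^4*a₂^5*A^3 + (84)*X^4*Y^5*a₁^5*a₂^4*A + (-180)*X^4*Y^5*a₁^5*a₂^4*A^2 + (84)*X^4*Y^5*a₁^5*a₂^4*A^3 + (-3)*X^4*Y^7*a₁^5*a₂^2*A^3 + (48)*X^5*Y^2*a₁^3*a₂^8 + (96)*X^5*Y^2*a₁^3*a₂^8*A + (-72)*X^5*Y^2*a₁^4*a₂^7 + (48)*X^5*Y^2*a₁^4*a₂^7*A + (-96)*X^5*Y^2*a₁^5*a₂^6 + (96)*X^5*Y^2*a₁^5*a₂^6*A + (84)*X^5*Y^4*a₁^4*a₂^5*A + (-180)*X^5*Y^4*a₁^4*a₂^5*A^2 + (84)*X^5*Y^4*a₁^4*a₂^5*A^3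 + (-24)*X^5*Y^4*a₁^5*a₂^4*A + (24)*X^5*Y^4*a₁^5*a₂^4*A^3 + (-6)*X^5*Y^6*a₁^3*a₂^4*A^3 + (-3)*X^5*Y^6*a₁^3*a₂^4*A^4 + (3)*X^5*Y^6*a₁^4*a₂^3*A^3 + ((-9)/2)*X^5*Y^6*a₁^4*a₂^3*A^4 + (-6)*X^5*Y^6*a₁^5*a₂^2*A^3 + (6)*X^5*Y^6*a₁^5*a₂^2*A^4 + (24)*X^6*Y*a₁^3*a₂^8 + (-48)*X^6*Y*a₁^4*a₂^7 + (24)*X^6*Y^3*a₁^2*a₂^7*A + (-24)*X^6*Y^3*a₁^2*a₂^7*A^2 + (18)*X^6*Y^3*a₁^3*a₂^6*A + (-12)*X^6*Y^3*a₁^3*a₂^6*A^2 + (-12)*X^6*Y^3*a₁^4*a₂^5*A + (-24)*X^6*Y^3*a₁^4*a₂^5*A^2 + (-6)*X^6*Y^5*a₁^2*a₂^5*A^3 + (6)*X^6*Y^5*a₁^2*a₂^5*A^4 + (3)*X^6*Y^5*a₁^3*a₂^4*A^3 + ((-9)/2)*X^6*Y^5*a₁^3*a₂^4*A^4 + (-6)*X^6*Y^5*a₁^4*a₂^3*A^3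 + (-3)*X^6*Y^5*a₁^4*a₂^3*A^4 + ((-3)/8)*X^6*Y^7*a₁^3*a₂^2*A^5 + ((-3)/4)*X^6*Y^7*a₁^4*a₂*A^5 + (12)*X^7*Y^2*a₁*a₂^8*A + (-6)*X^7*Y^2*a₁^2*a₂^7*A + (-3)*X^7*Y^4*a₁^2*a₂^5*A^3 + ((-3)/4)*X^7*Y^6*a₁*a₂^4*A^5 + ((-3)/8)*X^7*Y^6*a₁^2*a₂^3*A^5) * hA'
  rw [hUt.deriv, (h1 x hD0x).deriv, hUx, hd3]
  exact mkdv_combine hD0x key
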